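/- With S = (s, t) ∈ ℝ^{2m×2} of full column rank, δ = (det(SᵀS))^{1/4}, and the optimal D̆⁻¹ = [[c̆⁻¹, −f̆],[0, c̆]] where c̆ = ‖s‖₂/δ and f̆ = (sᵀt)/(‖s‖₂δ), both columns of S D̆⁻¹ have Euclidean norm δ: ‖S D̆⁻¹ e₁‖₂ = ‖S D̆⁻¹ e₂‖₂ = δ. -/

import Mathlib

open Matrix

theorem Matrix.isHermitian_transpose_mul_self {α : Type*} {m n : Type*} [CommSemiring α] [StarRing α]
    [TrivialStar α] [Fintype m] (A : Matrix m n α) : (Aᵀ * A).IsHermitian := by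
  rw [Matrix.IsHermitian, Matrix.conjTranspose_eq_transpose_of_trivial, Matrix.transpose_mul,
    Matrix.transpose_transpose]

noncomputable def enorm' {m : ℕ} (v : Fin m → ℝ) : ℝ := Real.sqrt (∑ i, v i ^ 2)

noncomputable def frob {m n : ℕ} (A : Matrix (Fin m) (Fin n) ℝ) : ℝ :=
  Real.sqrt (∑ i, ∑ j, A i j ^ 2)

noncomputable def specNorm {m n : ℕ} (A : Matrix (Fin m) (Fin n) ℝ) : ℝ :=
  ‖(Matrix.toEuclideanLin A).toContinuousLinearMap‖

noncomputable def sigmaMax (B : Matrix (Fin 2) (Fin 2) ℝ) : ℝ :=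
  Real.sqrt (max ((Matrix.isHermitian_transpose_mul_self B).eigenvalues 0)
                 ((Matrix.isHermitian_transpose_mul_self B).eigenvalues 1))

noncomputable def sigmaMin (B : Matrix (Fin 2) (Fin 2) ℝ) : ℝ :=
  Real.sqrt (min ((Matrix.isHermitian_transpose_mul_self B).eigenvalues 0)
                 ((Matrix.isHermitian_transpose_mul_self B).eigenvalues 1))

theorem columns_of_optimally_scaled {m : ℕ} (S : Matrix (Fin (2*m)) (Fin 2) ℝ)
    (hSI : LinearIndependent ℝ ![fun i => S i 0, fun i => S i 1])
    (δ cb fb : ℝ)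
    (hδ : δ = Real.sqrt (Real.sqrt (Sᵀ * S).det))
    (hcb : cb = enorm' (fun i => S i 0) / δ)
    (hfb : fb = (∑ i, S i 0 * S i 1) / (enorm' (fun i => S i 0) * δ)) :
    enorm' (fun i => (S * (!![cb⁻¹, -fb; 0, cb] : Matrix (Fin 2) (Fin 2) ℝ)) i 0) = δ ∧
    enorm' (fun i => (S * (!![cb⁻¹, -fb; 0, cb] : Matrix (Fin 2) (Fin 2) ℝ)) i 1) = δ := by
  set s : Fin (2*m) → ℝ := fun i => S i 0 with hs
  set t : Fin (2*m) → ℝ := fun i => S i 1 with ht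
  set a : ℝ := ∑ i, s i ^ 2 with haa
  set b : ℝ := ∑ i, s i * t i with hbb
  set c : ℝ := ∑ i, t i ^ 2 with hcc
  -- a > 0
  have hs0 : s ≠ 0 := by
    have := hSI.ne_zero 0
    simpa [hs] using this
  have ha : 0 < a := by
    rcases Function.ne_iff.mp hs0 with ⟨i, hi⟩
    refine Finset.sum_pos' (fun j _ => sq_nonneg _) ⟨i, Finset.mem_univ i, ?_⟩
    have : s i ≠ 0 := hi
    positivity
  -- discriminant > 0
  have hne : (fun i => b * s i - a * t i) ≠ 0 := by
    intro h
    have hli := Fintype.linearIndependent_iff.mp hSI ![b, -a]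
    have hz : ∑ j, (![b, -a] : Fin 2 → ℝ) j • (![fun i => S i 0, fun i => S i 1] : Fin 2 → _) j = 0 := by
      funext i
      have := congrFun h i
      simp only [Fin.sum_univ_two] at *
      simp only [Matrix.cons_val_zero, Matrix.cons_val_one, Matrix.head_cons,
        Pi.add_apply, Pi.smul_apply, smul_eq_mul, Pi.zero_apply]
      simp only [Pi.zero_apply] at this
      linarith [this]
    have := hli hz 1
    simp at this
    exact absurd this (ne_of_gt ha)
  have hsumpos : 0 < ∑ i, (b * s i - a * t i) ^ 2 := by
    rcases Function.ne_iff.mp hne with ⟨i, hi⟩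
    refine Finset.sum_pos' (fun j _ => sq_nonneg _) ⟨i, Finset.mem_univ i, ?_⟩
    have : b * s i - a * t i ≠ 0 := hi
    positivity
  have expand : ∑ i, (b * s i - a * t i) ^ 2 = a * (a * c - b ^ 2) := by
    have h1 : ∀ i, (b * s i - a * t i) ^ 2
        = b ^ 2 * s i ^ 2 - (2 * a * b) * (s i * t i) + a ^ 2 * t i ^ 2 := by
      intro i; ring
    simp_rw [h1, Finset.sum_add_distrib, Finset.sum_sub_distrib, ← Finset.mul_sum,
      ← haa, ← hbb, ← hcc]
    ring
  have hdisc : 0 < a * c - b ^ 2 := by nlinarith [hsumpos, expand]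
  -- determinant
  have hdet : (Sᵀ * S).det = a * c - b ^ 2 := by
    have h1 : (∑ i, S i 1 * S i 0) = b := by
      rw [hbb]; exact Finset.sum_congr rfl fun i _ => mul_comm _ _
    simp only [Matrix.det_fin_two, Matrix.mul_apply, Matrix.transpose_apply]
    rw [h1]
    simp only [haa, hcc, hs, ht, sq]
    rfl
  -- δ facts
  have hδpos : 0 < δ := by
    rw [hδ, hdet]; positivity
  have hδ2 : δ ^ 2 = Real.sqrt (a * c - b ^ 2) := by
    rw [hδ, hdet, Real.sq_sqrt (Real.sqrt_nonneg _)]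
  have hδ4 : δ ^ 4 = a * c - b ^ 2 := by
    have : δ ^ 4 = (δ ^ 2) ^ 2 := by ring
    rw [this, hδ2, Real.sq_sqrt hdisc.le]
  -- enorm s
  have hens : enorm' s = Real.sqrt a := rfl
  have hsa : Real.sqrt a ^ 2 = a := Real.sq_sqrt ha.le
  have hsapos : 0 < Real.sqrt a := Real.sqrt_pos.mpr ha
  have hcbpos : 0 < cb := by rw [hcb, hens]; positivity
  constructor
  · -- first column
    have hcol : (fun i => (S * (!![cb⁻¹, -fb; 0, cb] : Matrix (Fin 2) (Fin 2) ℝ)) i 0)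
        = fun i => s i * cb⁻¹ := by
      funext i
      simp [Matrix.mul_apply, Fin.sum_univ_two, hs]
    rw [hcol]
    have hsum : ∑ i, (s i * cb⁻¹) ^ 2 = δ ^ 2 := by
      have h1 : ∀ i, (s i * cb⁻¹) ^ 2 = s i ^ 2 * cb⁻¹ ^ 2 := fun i => by ring
      simp_rw [h1, ← Finset.sum_mul, ← haa]
      rw [hcb, hens]
      field_simp
      rw [hsa]
    unfold enorm'
    rw [hsum, Real.sqrt_sq hδpos.le]
  · -- second column
    have hcol : (fun i => (S * (!![cb⁻¹, -fb; 0, cb] : Matrix (Fin 2) (Fin 2) ℝ)) i 1)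
        = fun i => s i * (-fb) + t i * cb := by
      funext i
      simp [Matrix.mul_apply, Fin.sum_univ_two, hs, ht]
    rw [hcol]
    have hsum : ∑ i, (s i * (-fb) + t i * cb) ^ 2 = δ ^ 2 := by
      have h1 : ∀ i, (s i * (-fb) + t i * cb) ^ 2
          = fb ^ 2 * s i ^ 2 - (2 * fb * cb) * (s i * t i) + cb ^ 2 * t i ^ 2 := by
        intro i; ring
      simp_rw [h1, Finset.sum_add_distrib, Finset.sum_sub_distrib, ← Finset.mul_sum,
        ← haa, ← hbb, ← hcc]
      rw [hcb, hfb, hens]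
      field_simp
      linear_combination (c * (√a^2 + a) - 2*b^2 - δ^4) * hsa - a * hδ4
    unfold enorm'
    rw [hsum, Real.sqrt_sq hδpos.le]
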